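/- There is no homogeneous polynomial solution of degree ≥ 2 to the minimal surface equation on ℝⁿ: if P is a homogeneous polynomial of degree m ≥ 2 satisfying (1 + |∇P|²)ΔP − ∑_{i,j} P_{x_i} P_{x_j} P_{x_i x_j} = 0 on ℝⁿ, then P = 0. -/

import Mathlib

open MvPolynomial

variable {n : ℕ}

lemma single_add_sub (i : Fin n) (d : Fin n →₀ ℕ) (h : 0 < d i) :
    Finsupp.single i 1 + (d - Finsupp.single i 1) = d := by
  ext j
  rcases eq_or_ne j i with rfl | hj
  · simp [Finsupp.single_apply]; omega
  · simp [Finsupp.single_apply, Ne.symm hj, Finsupp.sub_apply]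

lemma X_mul_pderiv_monomial (i : Fin n) (d : Fin n →₀ ℕ) (a : ℝ) :
    X i * pderiv i (monomial d a) = monomial d (a * d i) := by
  rw [pderiv_monomial]
  rcases Nat.eq_zero_or_pos (d i) with h | h
  · simp [h]
  · rw [X, monomial_mul, one_mul, single_add_sub i d h]

lemma degree_univ (d : Fin n →₀ ℕ) : ∑ i : Fin n, d i = Finsupp.degree d := by
  rw [Finsupp.degree]
  exact (Finset.sum_subset (Finset.subset_univ _) (by simp +contextual)).symm

lemma isHom_degree {P : MvPolynomial (Fin n) ℝ} {m : ℕ} (h : P.IsHomogeneous m)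
    {d : Fin n →₀ ℕ} (hd : coeff d P ≠ 0) : Finsupp.degree d = m := by
  have := h hd
  rw [Finsupp.degree_eq_weight_one]; exact this


lemma euler {P : MvPolynomial (Fin n) ℝ} {m : ℕ} (h : P.IsHomogeneous m) :
    ∑ i : Fin n, X i * pderiv i P = C (m : ℝ) * P := by
  conv_lhs => rw [← P.support_sum_monomial_coeff]
  conv_rhs => rw [← P.support_sum_monomial_coeff]
  simp only [map_sum, Finset.mul_sum]
  rw [Finset.sum_comm]
  refine Finset.sum_congr rfl fun d hd => ?_
  rw [Finset.sum_congr rfl fun i _ => X_mul_pderiv_monomial i d (coeff d P),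
    ← map_sum (monomial d), C_mul_monomial]
  congr 1
  rw [← Finset.mul_sum, mul_comm]
  congr 1
  rw [← Nat.cast_sum, degree_univ d, isHom_degree h (mem_support_iff.mp hd)]

lemma isHom_pderiv {P : MvPolynomial (Fin n) ℝ} {m : ℕ} (h : P.IsHomogeneous m) (i : Fin n) :
    (pderiv i P).IsHomogeneous (m - 1) := by
  conv_lhs => rw [← P.support_sum_monomial_coeff]
  rw [map_sum]
  apply MvPolynomial.IsHomogeneous.sum
  intro d hd
  rw [pderiv_monomial]
  rcases Nat.eq_zero_or_pos (d i) with h0 | h0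
  · simp only [h0, Nat.cast_zero, mul_zero, map_zero]
    exact isHomogeneous_zero _ _ _
  · apply isHomogeneous_monomial
    have hdeg : Finsupp.degree d = m := isHom_degree h (mem_support_iff.mp hd)
    rw [← degree_univ] at hdeg ⊢
    have h2 : ∑ j : Fin n, ((Finsupp.single i 1 : Fin n →₀ ℕ) j + ((d - Finsupp.single i 1 : Fin n →₀ ℕ)) j)
        = ∑ j : Fin n, d j := by
      refine Finset.sum_congr rfl fun j _ => ?_
      rw [← Finsupp.add_apply, single_add_sub i d h0]
    rw [Finset.sum_add_distrib] at h2
    have h3 : ∑ j : Fin n, Finsupp.single i 1 j = 1 := by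
      simp [Finsupp.single_apply]
    omega

open ContinuousLinearMap in
lemma hasFDerivAt_eval (p : MvPolynomial (Fin n) ℝ) (x : Fin n → ℝ) :
    HasFDerivAt (fun y => eval y p)
      (∑ i : Fin n, eval x (pderiv i p) • (proj i : (Fin n → ℝ) →L[ℝ] ℝ)) x := by
  induction p using MvPolynomial.induction_on with
  | C a =>
      simp only [eval_C, pderiv_C, map_zero, zero_smul, Finset.sum_const_zero]
      exact hasFDerivAt_const _ _
  | add p q hp hq =>
      simp only [map_add]
      refine (hp.add hq).congr_fderiv (Eq.symm ?_)
      rw [← Finset.sum_add_distrib]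
      exact Finset.sum_congr rfl fun i _ => add_smul _ _ _
  | mul_X p j hp =>
      have hXj : HasFDerivAt (fun y : Fin n → ℝ => y j)
          (proj j : (Fin n → ℝ) →L[ℝ] ℝ) x := hasFDerivAt_apply j x
      have := hp.mul hXj
      simp only [map_mul, eval_X]
      refine this.congr_fderiv (Eq.symm ?_)
      ext v
      simp only [sum_apply, smul_apply, proj_apply, add_apply, Derivation.leibniz,
        pderiv_X, smul_eq_mul]
      have key : ∀ i : Fin n,
          eval x (p * Pi.single (M := fun _ : Fin n => MvPolynomial (Fin n) ℝ) i 1 j + X j * pderiv i p) * v i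
          = (if i = j then eval x p * v i else 0) + x j * (eval x (pderiv i p) * v i) := by
        intro i
        rcases eq_or_ne i j with rfl | hij
        · simp only [Pi.single_eq_same, mul_one, map_add, map_mul, eval_X, if_pos rfl]
          ring_nf
          simp [add_comm]
        · rw [Pi.single_eq_of_ne (Ne.symm hij), mul_zero, zero_add, map_mul, eval_X,
            if_neg hij, zero_add]
          ring
      rw [Finset.sum_congr rfl fun i _ => key i, Finset.sum_add_distrib,
        Finset.sum_ite_eq' Finset.univ j, ← Finset.mul_sum]
      simp

lemma eval_pderiv_zero_of_max {G : MvPolynomial (Fin n) ℝ} {x₀ : Fin n → ℝ}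
    (h : IsLocalMax (fun y => eval y G) x₀) (i : Fin n) : eval x₀ (pderiv i G) = 0 := by
  have h0 := h.hasFDerivAt_eq_zero (hasFDerivAt_eval G x₀)
  have := DFunLike.congr_fun h0 (Pi.single i 1)
  simpa [ContinuousLinearMap.proj_apply, Pi.single_apply, Finset.sum_ite_eq'] using this

lemma eval_smul_hom {P : MvPolynomial (Fin n) ℝ} {m : ℕ} (h : P.IsHomogeneous m)
    (c : ℝ) (x : Fin n → ℝ) : eval (c • x) P = c ^ m * eval x P := by
  rw [eval_eq', eval_eq', Finset.mul_sum]
  refine Finset.sum_congr rfl fun d hd => ?_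
  have hdeg : ∑ i : Fin n, d i = m := by
    rw [degree_univ]; exact isHom_degree h (mem_support_iff.mp hd)
  have : ∏ i : Fin n, (c • x) i ^ d i = c ^ m * ∏ i : Fin n, x i ^ d i := by
    simp only [Pi.smul_apply, smul_eq_mul, mul_pow]
    rw [Finset.prod_mul_distrib, Finset.prod_pow_eq_pow_sum, hdeg]
  rw [this]; ring

/-- There is no nonzero homogeneous polynomial solution of degree `m ≥ 2` to the minimal
surface equation on `ℝⁿ`: if `P` is homogeneous of degree `m ≥ 2` and satisfies
`(1 + |∇P|²)ΔP − ∑ᵢⱼ P_{xᵢ} P_{xⱼ} P_{xᵢxⱼ} = 0`, then `P = 0`. -/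
theorem stmt4 {n : ℕ} (m : ℕ) (hm : 2 ≤ m) (P : MvPolynomial (Fin n) ℝ)
    (hhom : P.IsHomogeneous m)
    (hMSE : (1 + ∑ i : Fin n, (pderiv i P) ^ 2) * (∑ i : Fin n, pderiv i (pderiv i P))
      - ∑ i : Fin n, ∑ j : Fin n,
          pderiv i P * pderiv j P * pderiv j (pderiv i P) = 0) :
    P = 0 := by
  classical
  by_contra hP
  -- homogeneity bookkeeping
  have hP1 : ∀ i, (pderiv i P).IsHomogeneous (m-1) := fun i => isHom_pderiv hhom i
  have hP2 : ∀ i j, (pderiv j (pderiv i P)).IsHomogeneous (m-2) := fun i j => by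
    have := isHom_pderiv (hP1 i) j
    rwa [show m-1-1 = m-2 by omega] at this
  set S := ∑ i : Fin n, (pderiv i P) ^ 2 with hSdef
  set Lap := ∑ i : Fin n, pderiv i (pderiv i P) with hLapdef
  set Cc := ∑ i : Fin n, ∑ j : Fin n,
      pderiv i P * pderiv j P * pderiv j (pderiv i P) with hCcdef
  have hShom : S.IsHomogeneous (2*m-2) := by
    apply IsHomogeneous.sum
    intro i _
    have := (hP1 i).pow 2
    rwa [show (m-1)*2 = 2*m-2 by omega] at this
  have hLaphom : Lap.IsHomogeneous (m-2) :=
    IsHomogeneous.sum _ _ _ (fun i _ => hP2 i i)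
  have hCchom : Cc.IsHomogeneous (3*m-4) := by
    apply IsHomogeneous.sum
    intro i _
    apply IsHomogeneous.sum
    intro j _
    have := ((hP1 i).mul (hP1 j)).mul (hP2 i j)
    rwa [show (m-1)+(m-1)+(m-2) = 3*m-4 by omega] at this
  -- degree split
  have hsplit : Lap = -(S * Lap - Cc) := by linear_combination hMSE
  have hLap0 : Lap = 0 := by
    by_contra h0
    have hb : (S * Lap - Cc).IsHomogeneous (3*m-4) := by
      apply IsHomogeneous.sub ?_ hCchom
      have := hShom.mul hLaphom
      rwa [show (2*m-2)+(m-2) = 3*m-4 by omega] at this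
    have hb' : Lap.IsHomogeneous (3*m-4) := by rw [hsplit]; exact hb.neg
    have := hLaphom.inj_right hb' h0
    omega
  have hCc0 : Cc = 0 := by
    rw [hLap0] at hsplit
    linear_combination -hsplit
  -- n = 0 case
  rcases Nat.eq_zero_or_pos n with hn | hn
  · have h0 : P.IsHomogeneous 0 := by
      intro d hd
      have hd0 : d = 0 := by
        ext i
        exact absurd (Fin.pos i) (by omega)
      rw [hd0, map_zero]
    have := hhom.inj_right h0 hP
    omega
  -- analysis: maximize (eval x P)^2 on the sphere
  set f : (Fin n → ℝ) → ℝ := fun x => (eval x P)^2 with hfdef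
  have hdiffP : Differentiable ℝ (fun y : Fin n → ℝ => eval y P) :=
    fun x => (hasFDerivAt_eval P x).differentiableAt
  have hfc : Continuous f := (hdiffP.continuous).pow 2
  set Sph : Set (Fin n → ℝ) := {x | ∑ i : Fin n, x i ^ 2 = 1} with hSphdef
  have hcsum : Continuous fun x : Fin n → ℝ => ∑ i : Fin n, x i ^ 2 :=
    continuous_finset_sum _ fun i _ => (continuous_apply i).pow 2
  have hSphC : IsClosed Sph := isClosed_eq hcsum continuous_const
  have hSphB : Bornology.IsBounded Sph := by
    apply Bornology.IsBounded.subset (Metric.isBounded_closedBall (x := (0 : Fin n → ℝ)) (r := 1))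
    intro x hx
    have hx' : ∑ i : Fin n, x i ^ 2 = 1 := hx
    simp only [Metric.mem_closedBall, dist_zero_right]
    rw [pi_norm_le_iff_of_nonneg zero_le_one]
    intro i
    have h1 : x i ^ 2 ≤ 1 := by
      calc x i ^ 2 ≤ ∑ j : Fin n, x j ^ 2 := by
            simpa using Finset.single_le_sum (f := fun i => x i ^ 2)
              (fun j _ => sq_nonneg (x j)) (Finset.mem_univ i)
        _ = 1 := hx'
    rw [Real.norm_eq_abs]
    nlinarith [abs_nonneg (x i), sq_abs (x i)]
  have hSphcpt : IsCompact Sph := Metric.isCompact_of_isClosed_isBounded hSphC hSphB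
  have hSphne : Sph.Nonempty := by
    have h1 : ∑ i : Fin n, (Pi.single (M := fun _ : Fin n => ℝ) ⟨0, hn⟩ 1) i ^ 2 = 1 := by
      rw [Finset.sum_eq_single_of_mem ⟨0, hn⟩ (Finset.mem_univ _)]
      · simp
      · intro j _ hj
        rw [Pi.single_eq_of_ne hj]
        norm_num
    exact ⟨_, h1⟩
  obtain ⟨x₀, hx₀S, hmax⟩ := hSphcpt.exists_isMaxOn hSphne hfc.continuousOn
  have hx₀ : ∑ i : Fin n, x₀ i ^ 2 = 1 := hx₀S
  set p0 : ℝ := eval x₀ P with hp0def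
  set d : Fin n → ℝ := fun i => eval x₀ (pderiv i P) with hddef
  -- global bound
  have hglob : ∀ y : Fin n → ℝ, (eval y P)^2 ≤ p0^2 * (∑ i : Fin n, y i ^ 2)^m := by
    intro y
    rcases eq_or_ne (∑ i : Fin n, y i ^ 2) 0 with hy | hy
    · have hy0 : y = 0 := by
        funext i
        have h1 : ∀ j ∈ Finset.univ, (0:ℝ) ≤ y j ^ 2 := fun j _ => sq_nonneg _
        have := (Finset.sum_eq_zero_iff_of_nonneg h1).mp hy i (Finset.mem_univ i)
        exact pow_eq_zero_iff (n := 2) (by norm_num) |>.mp this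
      rw [hy, hy0]
      have h0 : eval (0 : Fin n → ℝ) P = 0 := by
        have h1 := eval_smul_hom hhom 0 (0 : Fin n → ℝ)
        rw [zero_smul, zero_pow (by omega : m ≠ 0), zero_mul] at h1
        exact h1
      rw [h0]
      simp [zero_pow (by omega : m ≠ 0)]
    · set r : ℝ := Real.sqrt (∑ i : Fin n, y i ^ 2) with hrdef
      have hsum_pos : 0 < ∑ i : Fin n, y i ^ 2 := by
        rcases (Finset.sum_nonneg (fun j _ => sq_nonneg (y j))).lt_or_eq with h | h
        · exact h
        · exact absurd h.symm hy
      have hr : 0 < r := Real.sqrt_pos.mpr hsum_pos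
      have hr2 : r^2 = ∑ i : Fin n, y i ^ 2 := Real.sq_sqrt hsum_pos.le
      have hxS : r⁻¹ • y ∈ Sph := by
        have h1 : ∑ i : Fin n, (r⁻¹ • y) i ^ 2 = 1 := by
          have : ∀ i : Fin n, (r⁻¹ • y) i ^ 2 = r⁻¹ ^ 2 * y i ^ 2 := by
            intro i; simp [mul_pow]
          rw [Finset.sum_congr rfl fun i _ => this i, ← Finset.mul_sum, ← hr2]
          field_simp
        exact h1
      have hy_eq : y = r • (r⁻¹ • y) := by
        rw [smul_smul, mul_inv_cancel₀ hr.ne', one_smul]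
      have := eval_smul_hom hhom r (r⁻¹ • y)
      rw [← hy_eq] at this
      have hle : (eval (r⁻¹ • y) P)^2 ≤ p0^2 := hmax hxS
      calc (eval y P)^2 = (r^m)^2 * (eval (r⁻¹ • y) P)^2 := by rw [this]; ring
        _ ≤ (r^m)^2 * p0^2 := by
            apply mul_le_mul_of_nonneg_left hle (by positivity)
        _ = p0^2 * (∑ i : Fin n, y i ^ 2)^m := by
            rw [← hr2]; ring
  -- the polynomial G realizing the global maximum condition
  set Q1 : MvPolynomial (Fin n) ℝ := ∑ i : Fin n, X i ^ 2 with hQ1def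
  set G : MvPolynomial (Fin n) ℝ := P ^ 2 - C (p0 ^ 2) * Q1 ^ m with hGdef
  have hQ1ev : ∀ y : Fin n → ℝ, eval y Q1 = ∑ i : Fin n, y i ^ 2 := by
    intro y; simp [hQ1def]
  have hGev : ∀ y : Fin n → ℝ, eval y G
      = (eval y P) ^ 2 - p0 ^ 2 * (∑ i : Fin n, y i ^ 2) ^ m := by
    intro y
    simp only [hGdef, map_sub, map_mul, map_pow, eval_C, hQ1ev]
  have hmax' : IsLocalMax (fun y => eval y G) x₀ := by
    apply Filter.Eventually.of_forall
    intro y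
    show eval y G ≤ eval x₀ G
    rw [hGev, hGev, hx₀, one_pow]
    have := hglob y
    linarith
  have hgradG := eval_pderiv_zero_of_max hmax'
  have hQ1d : ∀ i : Fin n, pderiv i Q1 = 2 * X i := by
    intro i
    rw [hQ1def, map_sum, Finset.sum_eq_single_of_mem i (Finset.mem_univ i)]
    · rw [pderiv_pow, pderiv_X_self]
      push_cast
      ring
    · intro j _ hj
      rw [pderiv_pow, pderiv_X_of_ne hj]
      ring
  have hkey : ∀ i : Fin n, p0 * d i = (m:ℝ) * p0 ^ 2 * x₀ i := by
    intro i
    have e1 := hgradG i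
    rw [hGdef, map_sub, pderiv_pow, pderiv_C_mul, pderiv_pow, hQ1d i] at e1
    simp only [map_sub, map_mul, map_pow, eval_C, eval_X, map_natCast, hQ1ev, hx₀,
      one_pow, map_ofNat] at e1
    have hd' : eval x₀ (pderiv i P) = d i := rfl
    have hp' : eval x₀ P = p0 := rfl
    rw [hd', hp'] at e1
    push_cast at e1 ⊢
    nlinarith [e1]
  rcases eq_or_ne p0 0 with hp00 | hp00
  · -- maximum zero: P vanishes identically
    apply hP
    apply MvPolynomial.funext
    intro x
    rw [map_zero]
    have h1 := hglob x
    rw [hp00] at h1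
    have h2 : (eval x P) ^ 2 ≤ 0 := by
      calc (eval x P) ^ 2 ≤ 0 ^ 2 * (∑ i : Fin n, x i ^ 2) ^ m := h1
        _ = 0 := by ring
    have := sq_nonneg (eval x P)
    have h3 : (eval x P) ^ 2 = 0 := le_antisymm h2 this
    exact pow_eq_zero_iff (by norm_num) |>.mp h3
  · -- gradient parallel to position; Euler twice kills P
    have hdi : ∀ i, d i = (m:ℝ) * p0 * x₀ i := by
      intro i
      have := hkey i
      have h2 : p0 * d i = p0 * ((m:ℝ) * p0 * x₀ i) := by rw [this]; ring
      exact mul_left_cancel₀ hp00 h2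
    have heul2 : ∀ i, ∑ j : Fin n, x₀ j * eval x₀ (pderiv j (pderiv i P))
        = ((m - 1 : ℕ) : ℝ) * d i := by
      intro i
      have h1 := congrArg (eval x₀) (euler (hP1 i))
      simp only [map_sum, map_mul, eval_X, eval_C] at h1
      exact h1
    have heval0 : ∑ i : Fin n, ∑ j : Fin n,
        (eval x₀ (pderiv i P)) * (eval x₀ (pderiv j P)) * eval x₀ (pderiv j (pderiv i P))
        = 0 := by
      have h1 := congrArg (eval x₀) hCc0
      rw [hCcdef] at h1
      simpa only [map_sum, map_mul, map_zero] using h1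
    have hinner : ∀ i : Fin n, ∑ j : Fin n,
        (eval x₀ (pderiv i P)) * (eval x₀ (pderiv j P)) * eval x₀ (pderiv j (pderiv i P))
        = ((m:ℝ) * p0 * x₀ i) ^ 2 * ((m:ℝ) * p0) * ((m - 1 : ℕ) : ℝ) := by
      intro i
      have h1 : ∀ j : Fin n,
          (eval x₀ (pderiv i P)) * (eval x₀ (pderiv j P)) * eval x₀ (pderiv j (pderiv i P))
          = (d i * ((m:ℝ) * p0)) * (x₀ j * eval x₀ (pderiv j (pderiv i P))) := by
        intro j
        have : eval x₀ (pderiv j P) = d j := rfl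
        rw [this, hdi j]
        have : eval x₀ (pderiv i P) = d i := rfl
        rw [this]
        ring
      rw [Finset.sum_congr rfl fun j _ => h1 j, ← Finset.mul_sum, heul2 i, hdi i]
      ring
    rw [Finset.sum_congr rfl fun i _ => hinner i] at heval0
    have hsq : ∀ i : Fin n, ((m:ℝ) * p0 * x₀ i) ^ 2
        = ((m:ℝ) * p0) ^ 2 * (x₀ i ^ 2) := fun i => by ring
    rw [Finset.sum_congr rfl fun i _ => by rw [hsq i]] at heval0
    have hfin : ((m:ℝ) * p0) ^ 3 * ((m - 1 : ℕ) : ℝ) = 0 := by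
      have h2 : ∑ i : Fin n, ((m:ℝ) * p0) ^ 2 * x₀ i ^ 2 * ((m:ℝ) * p0) * ((m - 1 : ℕ) : ℝ)
          = ((m:ℝ) * p0) ^ 3 * ((m - 1 : ℕ) : ℝ) * ∑ i : Fin n, x₀ i ^ 2 := by
        rw [Finset.mul_sum]
        exact Finset.sum_congr rfl fun i _ => by ring
      rw [h2, hx₀, mul_one] at heval0
      exact heval0
    have hm0 : ((m:ℝ) * p0) ^ 3 ≠ 0 :=
      pow_ne_zero _ (mul_ne_zero (Nat.cast_ne_zero.mpr (by omega)) hp00)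
    have hm1 : ((m - 1 : ℕ) : ℝ) ≠ 0 := Nat.cast_ne_zero.mpr (by omega)
    exact (mul_ne_zero hm0 hm1) hfin
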